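/- Let D ⊆ ℝⁿ be a compact convex set, a a point of the interior of D, and p, h ∈ ℝ. Let â = (a, p) ∈ ℝⁿ × ℝ, T = {(x, h) : x ∈ D}, and let S = {(1−λ)â + λx̂ : x̂ ∈ rbd T, λ ∈ [0,1]} be the lateral of the truncated cone trunc(â, T). Then Stp(S) < +∞; i.e., there exists M ≥ 0 such that |v' − u'| ≤ M·‖v − u‖ for all (u, u'), (v, v') ∈ S. -/

import Mathlib

/-- The inclusion `x ↦ (x, h)` as an affine isometry. -/
noncomputable def statement8AffIncl (n : ℕ) (h : ℝ) :
    EuclideanSpace ℝ (Fin n) →ᵃⁱ[ℝ] (EuclideanSpace ℝ (Fin n) × ℝ) where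
  toAffineMap :=
    { toFun := fun x => (x, h)
      linear := LinearMap.inl ℝ _ ℝ
      map_vadd' := by intro q v; simp [Prod.ext_iff] }
  norm_map := fun x => by
    simp [Prod.norm_def]

/-- the lateral of a truncated cone over a compact convex base,
with apex over an interior point, has finite steepness. -/
theorem statement_8 (n : ℕ) (hn : 1 ≤ n)
    (D : Set (EuclideanSpace ℝ (Fin n)))
    (hD_cpt : IsCompact D) (hD_conv : Convex ℝ D)
    (a : EuclideanSpace ℝ (Fin n)) (ha : a ∈ interior D)
    (p h : ℝ)
    (T : Set (EuclideanSpace ℝ (Fin n) × ℝ))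
    (hT : T = (fun x => (x, h)) '' D)
    (S : Set (EuclideanSpace ℝ (Fin n) × ℝ))
    (hS : S = {z | ∃ w ∈ intrinsicFrontier ℝ T, ∃ l ∈ Set.Icc (0:ℝ) 1,
      z = (1 - l) • ((a, p) : EuclideanSpace ℝ (Fin n) × ℝ) + l • w}) :
    ∃ M : ℝ, 0 ≤ M ∧ ∀ u ∈ S, ∀ v ∈ S, |v.2 - u.2| ≤ M * ‖v.1 - u.1‖ := by
  -- a ball around `a` inside `D`
  obtain ⟨r, hr, hball⟩ := Metric.isOpen_iff.1 isOpen_interior a ha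
  have hballD : Metric.ball a r ⊆ D := hball.trans interior_subset
  -- the translated set K = D - a
  set e : EuclideanSpace ℝ (Fin n) ≃ₜ EuclideanSpace ℝ (Fin n) := Homeomorph.subRight a with he
  set K : Set (EuclideanSpace ℝ (Fin n)) := e '' D with hK
  have hKeq : K = (fun x => (-a) + x) '' D := by
    ext z; simp [hK, he, sub_eq_neg_add, add_comm, eq_comm]
  have hKconv : Convex ℝ K := hKeq ▸ hD_conv.translate (-a)
  have hKball : Metric.ball (0 : EuclideanSpace ℝ (Fin n)) r ⊆ K := by
    intro z hz
    refine ⟨z + a, hballD ?_, by simp [he]⟩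
    simpa [dist_eq_norm] using (by simpa [dist_eq_norm] using hz : ‖z - 0‖ < r)
  have hKnhds : K ∈ nhds (0 : EuclideanSpace ℝ (Fin n)) :=
    Filter.mem_of_superset (Metric.ball_mem_nhds 0 hr) hKball
  -- the frontier of `T` consists of points `(y, h)` with `y ∈ frontier D`
  have hTimg : T = (statement8AffIncl n h : _ →ᵃⁱ[ℝ] _) '' D := by rw [hT]; rfl
  have hfront : intrinsicFrontier ℝ T ⊆
      (fun y => ((y, h) : EuclideanSpace ℝ (Fin n) × ℝ)) '' frontier D := by
    rw [hTimg, AffineIsometry.image_intrinsicFrontier]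
    exact Set.image_mono (intrinsicFrontier_subset_frontier)
  -- every point of `S` has gauge of its first coordinate equal to `l` and
  -- second coordinate `p + l * (h - p)`
  have key : ∀ u ∈ S, ∃ l : ℝ, gauge K (u.1 - a) = l ∧ u.2 = p + l * (h - p) := by
    rintro u hu
    rw [hS] at hu
    obtain ⟨w, hw, l, hl, rfl⟩ := hu
    obtain ⟨y, hy, rfl⟩ := hfront hw
    refine ⟨l, ?_, ?_⟩
    · have h1 : ((1 - l) • ((a, p) : EuclideanSpace ℝ (Fin n) × ℝ) + l • (y, h)).1 - a
          = l • (y - a) := by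
        show (1 - l) • a + l • y - a = l • (y - a)
        rw [sub_smul, one_smul, smul_sub]
        abel
      have h2 : y - a ∈ frontier K := by
        have := (e.image_frontier D) ▸ Set.mem_image_of_mem e hy
        rw [hK]; simpa [he] using this
      have h3 : gauge K (y - a) = 1 :=
        (gauge_eq_one_iff_mem_frontier hKconv hKnhds).2 h2
      rw [h1, gauge_smul_of_nonneg hl.1, smul_eq_mul, h3, mul_one]
    · show (1 - l) * p + l * h = p + l * (h - p)
      ring
  -- conclude via Lipschitz continuity of the gauge
  have hlip : LipschitzWith (⟨r, hr.le⟩ : NNReal)⁻¹ (gauge K) :=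
    hKconv.lipschitzWith_gauge hr hKball
  refine ⟨|h - p| * r⁻¹, by positivity, ?_⟩
  intro u hu v hv
  obtain ⟨lu, hgu, hu2⟩ := key u hu
  obtain ⟨lv, hgv, hv2⟩ := key v hv
  have hdist : |lv - lu| ≤ r⁻¹ * ‖v.1 - u.1‖ := by
    have := hlip.dist_le_mul (v.1 - a) (u.1 - a)
    rw [Real.dist_eq, hgv, hgu] at this
    have e2 : (((⟨r, hr.le⟩ : NNReal)⁻¹ : NNReal) : ℝ) = r⁻¹ := NNReal.coe_inv _
    simpa [dist_eq_norm, sub_sub_sub_cancel_right, e2] using this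
  calc |v.2 - u.2| = |h - p| * |lv - lu| := by
        rw [hv2, hu2, ← abs_mul]; ring_nf
      _ ≤ |h - p| * (r⁻¹ * ‖v.1 - u.1‖) :=
        mul_le_mul_of_nonneg_left hdist (abs_nonneg _)
      _ = |h - p| * r⁻¹ * ‖v.1 - u.1‖ := by ring
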